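/- Let p, q ≥ 1, let G be a split graph with clique C = {c_1,…,c_p} and independent set U = {u_1,…,u_q}, and let G′ be the split reduction graph of G. Let K be an independent set of G′ of size m that contains at least one special vertex. Then every neighbour K′ of K in the token-sliding reconfiguration graph TS_m(G′) has the form K′ = (K \ {s}) ∪ {d} for some special vertex s ∈ K ∩ S and some vertex d ∈ D; that is, any valid token slide from K moves a token located on a special vertex onto a vertex of the clique D. -/

import Mathlib

/-- An independent set of a graph, as a finset of pairwise non-adjacent vertices. -/
def IsIndepF {V : Type*} (H : SimpleGraph V) (I : Finset V) : Prop :=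
  ∀ u ∈ I, ∀ v ∈ I, ¬ H.Adj u v

/-- The token-sliding reconfiguration graph `TS_m(H)`. -/
def TSGraph {V : Type*} [DecidableEq V] (H : SimpleGraph V) (m : ℕ) :
    SimpleGraph {I : Finset V // I.card = m ∧ IsIndepF H I} where
  Adj I J := ∃ u v, J.1 \ I.1 = {u} ∧ I.1 \ J.1 = {v} ∧ H.Adj u v
  symm := by constructor; rintro I J ⟨u, v, h1, h2, h3⟩; exact ⟨v, u, h2, h1, h3.symm⟩
  loopless := by
    constructor
    rintro I ⟨u, v, h1, h2, h3⟩
    rw [Finset.sdiff_self] at h1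
    exact (Finset.singleton_ne_empty u) h1.symm

/-- Vertices of the split reduction graph. -/
inductive SVert (p q : ℕ) : Type where
  | d : Fin p → SVert p q
  | w : Fin q → SVert p q
  | s : Fin q → SVert p q
deriving DecidableEq

/-- The split reduction graph `G'` of a split graph `G` on `Fin p ⊕ Fin q`
(`Sum.inl` is the clique `C`, `Sum.inr` the independent set `U`). -/
def splitRed (p q : ℕ) (G : SimpleGraph (Fin p ⊕ Fin q)) : SimpleGraph (SVert p q) :=
  SimpleGraph.fromRel (fun a b =>
    match a, b with
    | .d i, .d j => i ≠ j
    | .d i, .w j => G.Adj (Sum.inl i) (Sum.inr j)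
    | .s _, .d _ => True
    | _, _ => False)

lemma splitRed_adj_sd (p q : ℕ) (G : SimpleGraph (Fin p ⊕ Fin q)) (i : Fin q) (j : Fin p) :
    (splitRed p q G).Adj (SVert.s i) (SVert.d j) := by
  simp [splitRed, SimpleGraph.fromRel_adj]

lemma splitRed_adj_w_right (p q : ℕ) (G : SimpleGraph (Fin p ⊕ Fin q)) (a : SVert p q)
    (j : Fin q) (h : (splitRed p q G).Adj a (SVert.w j)) : ∃ k : Fin p, a = SVert.d k := by
  rcases a with k | k | k
  · exact ⟨k, rfl⟩
  · simp [splitRed, SimpleGraph.fromRel_adj] at h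
  · simp [splitRed, SimpleGraph.fromRel_adj] at h

lemma splitRed_adj_s_right (p q : ℕ) (G : SimpleGraph (Fin p ⊕ Fin q)) (a : SVert p q)
    (j : Fin q) (h : (splitRed p q G).Adj a (SVert.s j)) : ∃ k : Fin p, a = SVert.d k := by
  rcases a with k | k | k
  · exact ⟨k, rfl⟩
  · simp [splitRed, SimpleGraph.fromRel_adj] at h
  · simp [splitRed, SimpleGraph.fromRel_adj] at h

theorem splitReduction_slide_from_special_goes_to_clique
    (p q : ℕ) (hp : 1 ≤ p) (hq : 1 ≤ q) (G : SimpleGraph (Fin p ⊕ Fin q))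
    (hC : ∀ i j : Fin p, i ≠ j → G.Adj (Sum.inl i) (Sum.inl j))
    (hU : ∀ i j : Fin q, ¬ G.Adj (Sum.inr i) (Sum.inr j))
    (m : ℕ) (K : Finset (SVert p q)) (hK : K.card = m ∧ IsIndepF (splitRed p q G) K)
    (hspecial : ∃ i : Fin q, SVert.s i ∈ K) :
    ∀ K' : {I : Finset (SVert p q) // I.card = m ∧ IsIndepF (splitRed p q G) I},
      (TSGraph (splitRed p q G) m).Adj ⟨K, hK⟩ K' →
      ∃ (i : Fin q) (j : Fin p), SVert.s i ∈ K ∧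
        K'.1 = K.erase (SVert.s i) ∪ {SVert.d j} := by
  rintro K' ⟨u, v, hJI, hIJ, huv⟩
  obtain ⟨i, hi⟩ := hspecial
  have hvK : v ∈ K := by
    have : v ∈ K \ K'.1 := by rw [hIJ]; exact Finset.mem_singleton_self v
    exact (Finset.mem_sdiff.mp this).1
  have hvK' : v ∉ K'.1 := by
    have : v ∈ K \ K'.1 := by rw [hIJ]; exact Finset.mem_singleton_self v
    exact (Finset.mem_sdiff.mp this).2
  have huK' : u ∈ K'.1 := by
    have : u ∈ K'.1 \ K := by rw [hJI]; exact Finset.mem_singleton_self u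
    exact (Finset.mem_sdiff.mp this).1
  have huK : u ∉ K := by
    have : u ∈ K'.1 \ K := by rw [hJI]; exact Finset.mem_singleton_self u
    exact (Finset.mem_sdiff.mp this).2
  -- membership characterization of K'
  have hmemK' : ∀ a, a ∈ K'.1 ↔ (a ∈ K ∧ a ≠ v) ∨ a = u := by
    intro a
    constructor
    · intro ha
      by_cases hau : a = u
      · exact Or.inr hau
      · left
        have haK : a ∈ K := by
          by_contra haK
          have : a ∈ K'.1 \ K := Finset.mem_sdiff.mpr ⟨ha, haK⟩
          rw [hJI, Finset.mem_singleton] at this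
          exact hau this
        exact ⟨haK, fun h => hvK' (h ▸ ha)⟩
    · rintro (⟨haK, hav⟩ | rfl)
      · by_contra ha
        have : a ∈ K \ K'.1 := Finset.mem_sdiff.mpr ⟨haK, ha⟩
        rw [hIJ, Finset.mem_singleton] at this
        exact hav this
      · exact huK'
  -- v must be a special vertex
  rcases hv : v with vj | vj | vj
  · -- v = d vj : contradicts independence of K with s i
    exact absurd (splitRed_adj_sd p q G i vj) (hK.2 _ hi _ (hv ▸ hvK))
  · -- v = w vj : then u = d k, but s i ∈ K' too, contradiction
    obtain ⟨k, rfl⟩ := splitRed_adj_w_right p q G u vj (hv ▸ huv)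
    have hsK' : SVert.s i ∈ K'.1 := (hmemK' _).mpr (Or.inl ⟨hi, by rw [hv]; simp⟩)
    exact absurd (splitRed_adj_sd p q G i k) (K'.2.2 _ hsK' _ huK')
  · -- v = s vj : the good case
    obtain ⟨k, rfl⟩ := splitRed_adj_s_right p q G u vj (hv ▸ huv)
    refine ⟨vj, k, hv ▸ hvK, ?_⟩
    ext a
    rw [hmemK', Finset.mem_union, Finset.mem_erase, Finset.mem_singleton, hv]
    tauto
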